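/- Let A be a weight system with all inequalities of types (a) and (b) strict. Then for each 1 ≤ i_1 < … < i_k ≤ n, the minimizing sequence in the previous statement is unique up to permutation: the only multiset of pairs {(x_m,y_m)} achieving Σ a_{x_m,y_m} = a_{p_1,q_1}+…+a_{p_l,q_l} with f_{x_1,y_1}⋯f_{x_N,y_N}·e_{1,…,k} = ±e_{i_1,…,i_k} is {(p_1,q_1),…,(p_l,q_l)}. -/

import Mathlib

/-- The action of a product of root vectors `f_{x_1,y_1} ⋯ f_{x_N,y_N}` on the basis
of `Λ^k ℂ^n`, encoded on index sets: the rightmost factor acts first, `f_{x,y}`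
replaces `x` by `y` in the set (and kills the vector if `x` is absent or `y` present).
`applySeq L S = some I` expresses that the product maps `e_S` to `± e_I`. -/
def applySeq : List (ℕ × ℕ) → Finset ℕ → Option (Finset ℕ)
  | [], S => some S
  | p :: rest, S => (applySeq rest S).bind fun S' =>
      if p.1 ∈ S' ∧ p.2 ∉ S' then some (insert p.2 (S'.erase p.1)) else none

/-- The canonical antichain matching: `p_1 < … < p_l` the elements of `{1,…,k} \ I`
paired with `q_1 > … > q_l` the elements of `I \ {1,…,k}`. -/
def canonPairs (k : ℕ) (I : Finset ℕ) : List (ℕ × ℕ) :=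
  ((Finset.Icc 1 k \ I).sort (· ≤ ·)).zip (((I \ Finset.Icc 1 k).sort (· ≤ ·)).reverse)



section Arith
variable {n : ℕ} {a : ℕ → ℕ → ℤ}

lemma peel_aux (ha : ∀ i, 1 ≤ i → i + 2 ≤ n → a i (i+1) + a (i+1) (i+2) > a i (i+2))
    (hb : ∀ i j, 1 ≤ i → i + 1 < j → j + 1 ≤ n → a i j + a (i+1) (j+1) > a i (j+1) + a (i+1) j) :
    ∀ d x, 1 ≤ x → x + 2 + d ≤ n → a x (x+2+d) < a x (x+1+d) + a (x+1+d) (x+2+d) := by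
  intro d
  induction d with
  | zero => intro x hx hn2; have := ha x hx (by omega); simpa using this.lt
  | succ d ih =>
    intro x hx hn2
    have h1 := hb x (x+2+d) hx (by omega) (by omega)
    have h2 := ih (x+1) (by omega) (by omega)
    have e1 : x + 1 + 2 + d = x + 2 + d + 1 := by omega
    have e2 : x + 1 + 1 + d = x + 2 + d := by omega
    have e3 : x + 2 + (d+1) = x + 2 + d + 1 := by omega
    have e4 : x + 1 + (d+1) = x + 2 + d := by omega
    rw [e1, e2] at h2
    rw [e3, e4]
    linarith

lemma peel (ha : ∀ i, 1 ≤ i → i + 2 ≤ n → a i (i+1) + a (i+1) (i+2) > a i (i+2))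
    (hb : ∀ i j, 1 ≤ i → i + 1 < j → j + 1 ≤ n → a i j + a (i+1) (j+1) > a i (j+1) + a (i+1) j) :
    ∀ x z, 1 ≤ x → x + 2 ≤ z → z ≤ n → a x z < a x (z-1) + a (z-1) z := by
  intro x z hx hxz hzn
  have h := peel_aux ha hb (z - x - 2) x hx (by omega)
  have e1 : x + 2 + (z - x - 2) = z := by omega
  have e2 : x + 1 + (z - x - 2) = z - 1 := by omega
  rwa [e1, e2] at h

lemma rect1 (hb : ∀ i j, 1 ≤ i → i + 1 < j → j + 1 ≤ n → a i j + a (i+1) (j+1) > a i (j+1) + a (i+1) j) :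
    ∀ d i j, 1 ≤ i → i + 1 < j → j + 1 + d ≤ n → a i (j+1+d) + a (i+1) j < a i j + a (i+1) (j+1+d) := by
  intro d
  induction d with
  | zero => intro i j hi hij hjn; have := hb i j hi hij (by omega); simpa using this.lt
  | succ d ih =>
    intro i j hi hij hjn
    have h1 := hb i (j+1+d) hi (by omega) (by omega)
    have h2 := ih i j hi hij (by omega)
    have e1 : j + 1 + d + 1 = j + 1 + (d+1) := by omega
    rw [e1] at h1
    linarith

lemma rect (hb : ∀ i j, 1 ≤ i → i + 1 < j → j + 1 ≤ n → a i j + a (i+1) (j+1) > a i (j+1) + a (i+1) j) :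
    ∀ i i' j j', 1 ≤ i → i < i' → i' < j → j < j' → j' ≤ n → a i j' + a i' j < a i j + a i' j' := by
  suffices h : ∀ c i i' j j', i' = i + 1 + c → 1 ≤ i → i' < j → j < j' → j' ≤ n →
      a i j' + a i' j < a i j + a i' j' by
    intro i i' j j' h1 h2 h3 h4 h5
    exact h (i' - i - 1) i i' j j' (by omega) h1 h3 h4 h5
  intro c
  induction c with
  | zero =>
    intro i i' j j' hi' hi hij hjj hjn
    subst hi'
    have h := rect1 hb (j' - j - 1) i j hi (by omega) (by omega)
    have e1 : j + 1 + (j' - j - 1) = j' := by omega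
    rwa [e1] at h
  | succ c ih =>
    intro i i' j j' hi' hi hij hjj hjn
    have h1 := ih (i+1) i' j j' (by omega) (by omega) (by omega) hjj hjn
    have h2 := rect1 hb (j' - j - 1) i j hi (by omega) (by omega)
    have e1 : j + 1 + (j' - j - 1) = j' := by omega
    rw [e1] at h2
    linarith

lemma tri (ha : ∀ i, 1 ≤ i → i + 2 ≤ n → a i (i+1) + a (i+1) (i+2) > a i (i+2))
    (hb : ∀ i j, 1 ≤ i → i + 1 < j → j + 1 ≤ n → a i j + a (i+1) (j+1) > a i (j+1) + a (i+1) j) :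
    ∀ x y z, 1 ≤ x → x < y → y < z → z ≤ n → a x z < a x y + a y z := by
  intro x y z hx hxy hyz hzn
  by_cases hz : y + 1 = z
  · have h := peel ha hb x z hx (by omega) hzn
    have e1 : z - 1 = y := by omega
    rwa [e1] at h
  · have h1 := rect hb x y (y+1) z hx hxy (by omega) (by omega) hzn
    have h2 := peel ha hb x (y+1) hx (by omega) (by omega)
    have e1 : y + 1 - 1 = y := by omega
    rw [e1] at h2
    linarith
end Arith

def mzipM (P Q : Multiset ℕ) : List (ℕ × ℕ) :=
  (P.sort (· ≤ ·)).zip ((Q.sort (· ≤ ·)).reverse)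

lemma canonPairs_eq (k : ℕ) (I : Finset ℕ) :
    canonPairs k I = mzipM (Finset.Icc 1 k \ I).val (I \ Finset.Icc 1 k).val := rfl

lemma sort_snoc_max {q : ℕ} {Q : Multiset ℕ} (h : ∀ z ∈ Q, z ≤ q) :
    (q ::ₘ Q).sort (· ≤ ·) = Q.sort (· ≤ ·) ++ [q] := by
  have hperm : ((q ::ₘ Q).sort (· ≤ ·) : Multiset ℕ) = ↑(Q.sort (· ≤ ·) ++ [q]) := by
    rw [Multiset.sort_eq]
    have : ((Q.sort (· ≤ ·) ++ [q] : List ℕ) : Multiset ℕ)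
        = ↑(Q.sort (· ≤ ·)) + ↑([q] : List ℕ) := by
      exact_mod_cast rfl
    rw [this, Multiset.sort_eq]
    have : (↑([q] : List ℕ) : Multiset ℕ) = {q} := rfl
    rw [this, add_comm, Multiset.singleton_add]
  have hsorted : List.Pairwise (· ≤ ·) (Q.sort (· ≤ ·) ++ [q]) := by
    rw [List.pairwise_append]
    refine ⟨Multiset.pairwise_sort .., List.pairwise_singleton _ _, fun x hx y hy => ?_⟩
    simp only [List.mem_singleton] at hy
    subst hy
    exact h x (by rwa [Multiset.mem_sort] at hx)
  exact List.Perm.eq_of_pairwise' (Multiset.pairwise_sort ..) hsorted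
    (Multiset.coe_eq_coe.mp hperm)

lemma mzipM_cons {p q : ℕ} {P Q : Multiset ℕ} (hp : ∀ z ∈ P, p ≤ z) (hq : ∀ z ∈ Q, z ≤ q) :
    mzipM (p ::ₘ P) (q ::ₘ Q) = (p, q) :: mzipM P Q := by
  unfold mzipM
  rw [Multiset.sort_cons _ _ _ hp, sort_snoc_max hq, List.reverse_append]
  rfl

lemma mzipM_fst {P Q : Multiset ℕ} (h : Multiset.card P = Multiset.card Q) :
    (((mzipM P Q).map Prod.fst : List ℕ) : Multiset ℕ) = P := by
  unfold mzipM
  rw [List.map_fst_zip]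
  · exact Multiset.sort_eq _ _
  · simp [Multiset.length_sort, h]

lemma mzipM_snd {P Q : Multiset ℕ} (h : Multiset.card P = Multiset.card Q) :
    (((mzipM P Q).map Prod.snd : List ℕ) : Multiset ℕ) = Q := by
  unfold mzipM
  rw [List.map_snd_zip]
  · rw [Multiset.coe_reverse, Multiset.sort_eq]
  · simp [Multiset.length_sort, h]

lemma mzipM_mem {pq : ℕ × ℕ} {P Q : Multiset ℕ} (h : pq ∈ mzipM P Q) :
    pq.1 ∈ P ∧ pq.2 ∈ Q := by
  obtain ⟨h1, h2⟩ := List.of_mem_zip (by exact h)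
  constructor
  · rwa [Multiset.mem_sort] at h1
  · rw [List.mem_reverse] at h2; rwa [Multiset.mem_sort] at h2

section
variable {α : Type*} [DecidableEq α] {B T' : Finset α} {x y : α}

lemma move_pt_aa (hxT : x ∈ T') (hyT : y ∉ T') (hxB : x ∈ B) (hyB : y ∈ B) (hxy : x ≠ y) :
    B \ insert y (T'.erase x) = insert x ((B \ T').erase y) := by
  ext z
  by_cases h1 : z = x <;> by_cases h2 : z = y <;> simp_all <;> tauto

lemma move_qt_aa (hxB : x ∈ B) (hyB : y ∈ B) :
    insert y (T'.erase x) \ B = T' \ B := by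
  ext z
  by_cases h1 : z = x <;> by_cases h2 : z = y <;> simp_all <;> tauto

lemma move_pt_ab (hxT : x ∈ T') (hxB : x ∈ B) (hyB : y ∉ B) :
    B \ insert y (T'.erase x) = insert x (B \ T') := by
  ext z
  by_cases h1 : z = x <;> by_cases h2 : z = y <;> simp_all <;> tauto

lemma move_qt_ab (hxB : x ∈ B) (hyB : y ∉ B) (hyT : y ∉ T') :
    insert y (T'.erase x) \ B = insert y (T' \ B) := by
  ext z
  by_cases h1 : z = x <;> by_cases h2 : z = y <;> simp_all <;> tauto

lemma move_pt_bb (hxB : x ∉ B) (hyB : y ∉ B) :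
    B \ insert y (T'.erase x) = B \ T' := by
  ext z
  by_cases h1 : z = x <;> by_cases h2 : z = y <;> simp_all <;> tauto

lemma move_qt_bb (hxB : x ∉ B) (hyB : y ∉ B) (hxT : x ∈ T') (hyT : y ∉ T') (hxy : x ≠ y) :
    insert y (T'.erase x) \ B = insert y ((T' \ B).erase x) := by
  ext z
  by_cases h1 : z = x <;> by_cases h2 : z = y <;> simp_all <;> tauto

end


lemma match_min (n k : ℕ) (a : ℕ → ℕ → ℤ)
    (rect : ∀ i i' j j', 1 ≤ i → i < i' → i' < j → j < j' → j' ≤ n →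
      a i j' + a i' j < a i j + a i' j') :
    ∀ N (F : Multiset (ℕ × ℕ)), Multiset.card F = N →
    (∀ pq ∈ F, 1 ≤ pq.1 ∧ pq.1 ≤ k ∧ k < pq.2 ∧ pq.2 ≤ n) →
    (F.map Prod.fst).Nodup → (F.map Prod.snd).Nodup →
    (((mzipM (F.map Prod.fst) (F.map Prod.snd) : List (ℕ × ℕ)) : Multiset (ℕ × ℕ)).map
        (fun pq => a pq.1 pq.2)).sum ≤ (F.map (fun pq => a pq.1 pq.2)).sum
    ∧ ((F.map (fun pq => a pq.1 pq.2)).sum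
        = (((mzipM (F.map Prod.fst) (F.map Prod.snd) : List (ℕ × ℕ)) : Multiset (ℕ × ℕ)).map
            (fun pq => a pq.1 pq.2)).sum
      → F = ↑(mzipM (F.map Prod.fst) (F.map Prod.snd))) := by
  intro N
  induction N using Nat.strong_induction_on with
  | _ N ih =>
    intro F hcard hbnd hnf hns
    rcases Nat.eq_zero_or_pos N with hN | hN
    · subst hN
      have hF : F = 0 := Multiset.card_eq_zero.mp hcard
      subst hF
      simp [mzipM]
    · have hF0 : F ≠ 0 := by
        intro h; rw [h] at hcard; simp at hcard; omega
      -- finsets of firsts and seconds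
      set P : Multiset ℕ := F.map Prod.fst with hP
      set Q : Multiset ℕ := F.map Prod.snd with hQ
      have hPne : P ≠ 0 := by
        simp [hP, Multiset.map_eq_zero]; exact hF0
      have hQne : Q ≠ 0 := by
        simp [hQ, Multiset.map_eq_zero]; exact hF0
      let Pf : Finset ℕ := ⟨P, hnf⟩
      let Qf : Finset ℕ := ⟨Q, hns⟩
      have hPfne : Pf.Nonempty := by
        rcases Multiset.exists_mem_of_ne_zero hPne with ⟨z, hz⟩; exact ⟨z, hz⟩
      have hQfne : Qf.Nonempty := by
        rcases Multiset.exists_mem_of_ne_zero hQne with ⟨z, hz⟩; exact ⟨z, hz⟩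
      set p0 := Pf.min' hPfne with hp0
      set q0 := Qf.max' hQfne with hq0
      have hp0min : ∀ z ∈ P, p0 ≤ z := fun z hz => Pf.min'_le z hz
      have hq0max : ∀ z ∈ Q, z ≤ q0 := fun z hz => Qf.le_max' z hz
      have hp0P : p0 ∈ P := Pf.min'_mem hPfne
      have hq0Q : q0 ∈ Q := Qf.max'_mem hQfne
      obtain ⟨e1, he1F, he1⟩ := Multiset.mem_map.mp hp0P
      obtain ⟨e2, he2F, he2⟩ := Multiset.mem_map.mp hq0Q
      by_cases hee : e1 = e2
      · -- minimal first and maximal second in the same pair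
        subst hee
        have he1eq : e1 = (p0, q0) := by
          rw [← he1, ← he2]
        subst he1eq
        set F' := F.erase (p0, q0) with hF'
        have hFc : F = (p0, q0) ::ₘ F' := (Multiset.cons_erase he1F).symm
        have hPc : P = p0 ::ₘ F'.map Prod.fst := by
          rw [hP, hFc, Multiset.map_cons]
        have hQc : Q = q0 ::ₘ F'.map Prod.snd := by
          rw [hQ, hFc, Multiset.map_cons]
        have hzip : mzipM P Q = (p0, q0) :: mzipM (F'.map Prod.fst) (F'.map Prod.snd) := by
          rw [hPc, hQc]
          exact mzipM_cons
            (fun z hz => hp0min z (by rw [hPc]; exact Multiset.mem_cons_of_mem hz))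
            (fun z hz => hq0max z (by rw [hQc]; exact Multiset.mem_cons_of_mem hz))
        have hcard' : Multiset.card F' = N - 1 := by
          have : Multiset.card F = Multiset.card F' + 1 := by rw [hFc]; simp
          omega
        have hbnd' : ∀ pq ∈ F', 1 ≤ pq.1 ∧ pq.1 ≤ k ∧ k < pq.2 ∧ pq.2 ≤ n :=
          fun pq hpq => hbnd pq (Multiset.mem_of_mem_erase hpq)
        have hnf' : (F'.map Prod.fst).Nodup := by
          have := hnf; rw [hPc] at this; exact (Multiset.nodup_cons.mp this).2
        have hns' : (F'.map Prod.snd).Nodup := by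
          have := hns; rw [hQc] at this; exact (Multiset.nodup_cons.mp this).2
        obtain ⟨ihle, iheq⟩ := ih (N - 1) (by omega) F' hcard' hbnd' hnf' hns'
        rw [hzip, hFc]
        constructor
        · simp only [← Multiset.cons_coe, Multiset.map_cons, Multiset.sum_cons]
          linarith
        · intro hsum
          simp only [← Multiset.cons_coe, Multiset.map_cons, Multiset.sum_cons] at hsum ⊢
          have : (F'.map (fun pq => a pq.1 pq.2)).sum
              = (((mzipM (F'.map Prod.fst) (F'.map Prod.snd) : List (ℕ × ℕ)) :
                  Multiset (ℕ × ℕ)).map (fun pq => a pq.1 pq.2)).sum := by linarith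
          conv_lhs => rw [iheq this]
      · -- two different pairs: exchange
        have he2F' : e2 ∈ F.erase e1 := by
          rw [Multiset.mem_erase_of_ne (fun h : e2 = e1 => hee h.symm)]
          exact he2F
        set F'' := (F.erase e1).erase e2 with hF''
        have hFc : F = e1 ::ₘ e2 ::ₘ F'' := by
          rw [hF'', Multiset.cons_erase he2F', Multiset.cons_erase he1F]
        -- names
        obtain ⟨p1, q1⟩ := e1
        obtain ⟨p2, q2⟩ := e2
        simp only at he1 he2
        subst he1; subst he2
        have hPc : P = p0 ::ₘ p2 ::ₘ F''.map Prod.fst := by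
          rw [hP, hFc]; simp
        have hQc : Q = q1 ::ₘ q0 ::ₘ F''.map Prod.snd := by
          rw [hQ, hFc]; simp
        -- distinctness
        have hp2ne : p2 ≠ p0 := by
          intro h
          have hnf := hnf
          rw [hPc, h] at hnf
          have := (Multiset.nodup_cons.mp hnf).1
          exact this (Multiset.mem_cons_self _ _)
        have hq1ne : q1 ≠ q0 := by
          intro h
          have hns := hns
          rw [hQc, h] at hns
          have := (Multiset.nodup_cons.mp hns).1
          exact this (Multiset.mem_cons_self _ _)
        have hp0p2 : p0 < p2 := lt_of_le_of_ne (hp0min p2 (by rw [hPc]; simp)) (Ne.symm hp2ne)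
        have hq1q0 : q1 < q0 := lt_of_le_of_ne (hq0max q1 (by rw [hQc]; simp)) hq1ne
        -- bounds
        have hb1 := hbnd (p0, q1) he1F
        have hb2 := hbnd (p2, q0) he2F
        simp only at hb1 hb2
        -- the exchanged multiset
        set G : Multiset (ℕ × ℕ) := (p2, q1) ::ₘ F'' with hG
        have hGfst : G.map Prod.fst = p2 ::ₘ F''.map Prod.fst := by rw [hG]; simp
        have hGsnd : G.map Prod.snd = q1 ::ₘ F''.map Prod.snd := by rw [hG]; simp
        have hcardG : Multiset.card G = N - 1 := by
          have : Multiset.card F = Multiset.card F'' + 2 := by rw [hFc]; simp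
          rw [hG]; simp; omega
        have hbndG : ∀ pq ∈ G, 1 ≤ pq.1 ∧ pq.1 ≤ k ∧ k < pq.2 ∧ pq.2 ≤ n := by
          intro pq hpq
          rw [hG, Multiset.mem_cons] at hpq
          rcases hpq with h | h
          · subst h; exact ⟨hb2.1, hb2.2.1, hb1.2.2.1, hb1.2.2.2⟩
          · exact hbnd pq (by rw [hFc]; exact Multiset.mem_cons_of_mem (Multiset.mem_cons_of_mem h))
        have hnfG : (G.map Prod.fst).Nodup := by
          rw [hGfst]
          have := hnf; rw [hPc] at this
          exact (Multiset.nodup_cons.mp this).2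
        have hnsG : (G.map Prod.snd).Nodup := by
          rw [hGsnd]
          have := hns; rw [hQc] at this
          obtain ⟨hq1notin, h2⟩ := Multiset.nodup_cons.mp this
          obtain ⟨hq0notin, h3⟩ := Multiset.nodup_cons.mp h2
          exact Multiset.nodup_cons.mpr ⟨fun h => hq1notin (Multiset.mem_cons_of_mem h), h3⟩
        obtain ⟨ihle, _⟩ := ih (N - 1) (by omega) G hcardG hbndG hnfG hnsG
        -- canonical zip of P Q
        have hzip : mzipM P Q = (p0, q0) :: mzipM (G.map Prod.fst) (G.map Prod.snd) := by
          have hQc2 : Q = q0 ::ₘ q1 ::ₘ F''.map Prod.snd := by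
            rw [hQc]; exact Multiset.cons_swap _ _ _
          rw [hPc, hQc2, ← hGfst, ← hGsnd]
          refine mzipM_cons (fun z hz => hp0min z ?_) (fun z hz => hq0max z ?_)
          · rw [hPc, hGfst] at *; exact Multiset.mem_cons_of_mem hz
          · rw [hQc2] at *; rw [hGsnd] at hz; exact Multiset.mem_cons_of_mem hz
        have hrect := rect p0 p2 q1 q0 hb1.1 hp0p2 (by omega) hq1q0 hb2.2.2.2
        rw [hzip]
        have hsumF : (F.map (fun pq => a pq.1 pq.2)).sum
            = a p0 q1 + a p2 q0 + (F''.map (fun pq => a pq.1 pq.2)).sum := by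
          rw [hFc]; simp; ring
        have hsumG : (G.map (fun pq => a pq.1 pq.2)).sum
            = a p2 q1 + (F''.map (fun pq => a pq.1 pq.2)).sum := by
          rw [hG]; simp
        constructor
        · simp only [← Multiset.cons_coe, Multiset.map_cons, Multiset.sum_cons]
          rw [hsumF]
          rw [hsumG] at ihle
          linarith
        · intro hsum
          exfalso
          simp only [← Multiset.cons_coe, Multiset.map_cons, Multiset.sum_cons] at hsum
          rw [hsumF] at hsum
          rw [hsumG] at ihle
          linarith

lemma step_lemma (n k : ℕ) (a : ℕ → ℕ → ℤ)
    (tri : ∀ x y z, 1 ≤ x → x < y → y < z → z ≤ n → a x z < a x y + a y z)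
    (rect : ∀ i i' j j', 1 ≤ i → i < i' → i' < j → j < j' → j' ≤ n →
      a i j' + a i' j < a i j + a i' j')
    (T' : Finset ℕ) (hsub : T' ⊆ Finset.Icc 1 n) (hcard : T'.card = k)
    (x y : ℕ) (hx1 : 1 ≤ x) (hxy : x < y) (hyn : y ≤ n) (hxT : x ∈ T') (hyT : y ∉ T') :
    ((Multiset.map (fun pq : ℕ × ℕ => a pq.1 pq.2)
        (↑(canonPairs k (insert y (T'.erase x))) : Multiset (ℕ × ℕ))).sum
      ≤ a x y + (Multiset.map (fun pq : ℕ × ℕ => a pq.1 pq.2)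
        (↑(canonPairs k T') : Multiset (ℕ × ℕ))).sum)
    ∧ ((Multiset.map (fun pq : ℕ × ℕ => a pq.1 pq.2)
          (↑(canonPairs k (insert y (T'.erase x))) : Multiset (ℕ × ℕ))).sum
        = a x y + (Multiset.map (fun pq : ℕ × ℕ => a pq.1 pq.2)
          (↑(canonPairs k T') : Multiset (ℕ × ℕ))).sum
      → (↑(canonPairs k (insert y (T'.erase x))) : Multiset (ℕ × ℕ))
          = (x, y) ::ₘ ↑(canonPairs k T')) := by
  set B : Finset ℕ := Finset.Icc 1 k with hB
  set T : Finset ℕ := insert y (T'.erase x) with hT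
  have hcardB : B.card = k := by simp [hB, Nat.card_Icc]
  have hPQ : Multiset.card (B \ T').val = Multiset.card (T' \ B).val := by
    have := Finset.card_sdiff_comm (s := B) (t := T') (by rw [hcardB, hcard])
    simpa [Finset.card] using this
  set M' : Multiset (ℕ × ℕ) := (↑(canonPairs k T') : Multiset (ℕ × ℕ)) with hM'
  have hfst : Multiset.map Prod.fst M' = (B \ T').val := by
    rw [hM', canonPairs_eq, Multiset.map_coe]
    exact mzipM_fst hPQ
  have hsnd : Multiset.map Prod.snd M' = (T' \ B).val := by
    rw [hM', canonPairs_eq, Multiset.map_coe]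
    exact mzipM_snd hPQ
  have hmemM : ∀ pq ∈ M', pq.1 ∈ B \ T' ∧ pq.2 ∈ T' \ B := by
    intro pq hpq
    rw [hM', Multiset.mem_coe, canonPairs_eq] at hpq
    obtain ⟨h1, h2⟩ := mzipM_mem hpq
    exact ⟨h1, h2⟩
  have hbndM : ∀ pq ∈ M', 1 ≤ pq.1 ∧ pq.1 ≤ k ∧ k < pq.2 ∧ pq.2 ≤ n := by
    intro pq hpq
    obtain ⟨h1, h2⟩ := hmemM pq hpq
    rw [Finset.mem_sdiff, Finset.mem_Icc] at h1
    rw [Finset.mem_sdiff] at h2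
    have h2n := hsub h2.1
    rw [Finset.mem_Icc] at h2n
    have h2B := h2.2
    rw [Finset.mem_Icc] at h2B
    exact ⟨h1.1.1, h1.1.2, by omega, by omega⟩
  have hyk1 : 1 ≤ y := by omega
  by_cases hxk : x ≤ k
  · by_cases hyk : y ≤ k
    · -- Case A : x ∈ B, y ∈ B : strict
      have hxB : x ∈ B := by rw [hB, Finset.mem_Icc]; omega
      have hyB : y ∈ B := by rw [hB, Finset.mem_Icc]; omega
      have hPT : B \ T = insert x ((B \ T').erase y) :=
        move_pt_aa hxT hyT hxB hyB (by omega)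
      have hQT : T \ B = T' \ B := move_qt_aa hxB hyB
      -- find the partner of y
      have hyP : y ∈ Multiset.map Prod.fst M' := by
        rw [hfst, ← Finset.mem_def]
        simp only [hB, Finset.mem_sdiff, Finset.mem_Icc]
        exact ⟨⟨hyk1, hyk⟩, hyT⟩
      obtain ⟨e, heM0, hey⟩ := Multiset.mem_map.mp hyP
      set q := e.2 with hqdef
      have heM : (y, q) ∈ M' := by
        have heq : e = (y, q) := Prod.ext (by rw [hey]) rfl
        rwa [heq] at heM0
      have hqmem : q ∈ T' \ B := (hmemM (y, q) heM).2
      have hbq := hbndM (y, q) heM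
      simp only at hbq
      set F : Multiset (ℕ × ℕ) := (x, q) ::ₘ M'.erase (y, q) with hF
      have hMc : M' = (y, q) ::ₘ M'.erase (y, q) := (Multiset.cons_erase heM).symm
      have hfstE : Multiset.map Prod.fst (M'.erase (y, q)) = ((B \ T').val).erase y := by
        have h1 : Multiset.map Prod.fst M'
            = y ::ₘ Multiset.map Prod.fst (M'.erase (y, q)) := by
          conv_lhs => rw [hMc]
          simp
        rw [← hfst, h1, Multiset.erase_cons_head]
      have hsndE : Multiset.map Prod.snd M' = q ::ₘ Multiset.map Prod.snd (M'.erase (y, q)) := by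
        conv_lhs => rw [hMc]
        simp
      have hxnB : x ∉ (B \ T').erase y := by
        intro h
        have := Finset.mem_of_mem_erase h
        rw [Finset.mem_sdiff] at this
        exact this.2 hxT
      have hfstF : Multiset.map Prod.fst F = (B \ T).val := by
        rw [hPT, Finset.insert_val_of_notMem hxnB, Finset.erase_val]
        rw [hF, Multiset.map_cons, hfstE]
      have hsndF : Multiset.map Prod.snd F = (T \ B).val := by
        rw [hQT, ← hsnd, hsndE, hF, Multiset.map_cons]
      have hbndF : ∀ pq ∈ F, 1 ≤ pq.1 ∧ pq.1 ≤ k ∧ k < pq.2 ∧ pq.2 ≤ n := by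
        intro pq hpq
        rw [hF, Multiset.mem_cons] at hpq
        rcases hpq with h | h
        · subst h; exact ⟨hx1, hxk, hbq.2.2.1, hbq.2.2.2⟩
        · exact hbndM pq (Multiset.mem_of_mem_erase h)
      have hnfF : (Multiset.map Prod.fst F).Nodup := by rw [hfstF]; exact (B \ T).nodup
      have hnsF : (Multiset.map Prod.snd F).Nodup := by rw [hsndF]; exact (T \ B).nodup
      obtain ⟨hle, _⟩ := match_min n k a rect (Multiset.card F) F rfl hbndF hnfF hnsF
      rw [hfstF, hsndF, ← canonPairs_eq] at hle
      have hsumF : (F.map (fun pq => a pq.1 pq.2)).sum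
          = a x q + ((M'.erase (y, q)).map (fun pq => a pq.1 pq.2)).sum := by
        rw [hF]; simp
      have hsumM : (M'.map (fun pq => a pq.1 pq.2)).sum
          = a y q + ((M'.erase (y, q)).map (fun pq => a pq.1 pq.2)).sum := by
        conv_lhs => rw [hMc]
        simp
      have htri := tri x y q hx1 hxy (by omega) (by omega)
      constructor
      · rw [hsumF] at hle; linarith
      · intro hsum
        exfalso
        rw [hsumF] at hle; linarith
    · -- Case C : x ∈ B, y ∉ B : the tight case
      have hyk' : k < y := by omega
      have hxB : x ∈ B := by rw [hB, Finset.mem_Icc]; omega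
      have hyB : y ∉ B := by rw [hB, Finset.mem_Icc]; omega
      have hPT : B \ T = insert x (B \ T') := move_pt_ab hxT hxB hyB
      have hQT : T \ B = insert y (T' \ B) := move_qt_ab hxB hyB hyT
      set F : Multiset (ℕ × ℕ) := (x, y) ::ₘ M' with hF
      have hxnB : x ∉ B \ T' := by
        rw [Finset.mem_sdiff]; intro h; exact h.2 hxT
      have hynB : y ∉ T' \ B := by
        rw [Finset.mem_sdiff]; intro h; exact hyT h.1
      have hfstF : Multiset.map Prod.fst F = (B \ T).val := by
        rw [hPT, Finset.insert_val_of_notMem hxnB, hF, Multiset.map_cons, hfst]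
      have hsndF : Multiset.map Prod.snd F = (T \ B).val := by
        rw [hQT, Finset.insert_val_of_notMem hynB, hF, Multiset.map_cons, hsnd]
      have hbndF : ∀ pq ∈ F, 1 ≤ pq.1 ∧ pq.1 ≤ k ∧ k < pq.2 ∧ pq.2 ≤ n := by
        intro pq hpq
        rw [hF, Multiset.mem_cons] at hpq
        rcases hpq with h | h
        · subst h; exact ⟨hx1, hxk, hyk', hyn⟩
        · exact hbndM pq h
      have hnfF : (Multiset.map Prod.fst F).Nodup := by rw [hfstF]; exact (B \ T).nodup
      have hnsF : (Multiset.map Prod.snd F).Nodup := by rw [hsndF]; exact (T \ B).nodup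
      obtain ⟨hle, heq⟩ := match_min n k a rect (Multiset.card F) F rfl hbndF hnfF hnsF
      rw [hfstF, hsndF, ← canonPairs_eq] at hle heq
      have hsumF : (F.map (fun pq => a pq.1 pq.2)).sum
          = a x y + (M'.map (fun pq => a pq.1 pq.2)).sum := by
        rw [hF]; simp
      constructor
      · rw [hsumF] at hle; exact hle
      · intro hsum
        have hthis := heq (by rw [hsumF]; linarith)
        rw [hF] at hthis
        exact hthis.symm
  · -- Case D : x ∉ B (hence y ∉ B) : strict
    have hxk' : k < x := by omega
    have hyk' : k < y := by omega
    have hxB : x ∉ B := by rw [hB, Finset.mem_Icc]; omega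
    have hyB : y ∉ B := by rw [hB, Finset.mem_Icc]; omega
    have hPT : B \ T = B \ T' := move_pt_bb hxB hyB
    have hQT : T \ B = insert y ((T' \ B).erase x) :=
      move_qt_bb hxB hyB hxT hyT (by omega)
    have hxQ : x ∈ Multiset.map Prod.snd M' := by
      rw [hsnd, ← Finset.mem_def]
      simp only [hB, Finset.mem_sdiff, Finset.mem_Icc]
      exact ⟨hxT, by omega⟩
    obtain ⟨e, heM0, hex⟩ := Multiset.mem_map.mp hxQ
    set p := e.1 with hpdef
    have heM : (p, x) ∈ M' := by
      have heq : e = (p, x) := Prod.ext rfl (by rw [hex])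
      rwa [heq] at heM0
    have hbp := hbndM (p, x) heM
    simp only at hbp
    set F : Multiset (ℕ × ℕ) := (p, y) ::ₘ M'.erase (p, x) with hF
    have hMc : M' = (p, x) ::ₘ M'.erase (p, x) := (Multiset.cons_erase heM).symm
    have hfstE : Multiset.map Prod.fst M'
        = p ::ₘ Multiset.map Prod.fst (M'.erase (p, x)) := by
      conv_lhs => rw [hMc]
      simp
    have hsndE : Multiset.map Prod.snd (M'.erase (p, x)) = ((T' \ B).val).erase x := by
      have h1 : Multiset.map Prod.snd M'
          = x ::ₘ Multiset.map Prod.snd (M'.erase (p, x)) := by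
        conv_lhs => rw [hMc]
        simp
      rw [← hsnd, h1, Multiset.erase_cons_head]
    have hynB : y ∉ (T' \ B).erase x := by
      intro h
      have := Finset.mem_of_mem_erase h
      rw [Finset.mem_sdiff] at this
      exact hyT this.1
    have hfstF : Multiset.map Prod.fst F = (B \ T).val := by
      rw [hPT, ← hfst, hfstE, hF, Multiset.map_cons]
    have hsndF : Multiset.map Prod.snd F = (T \ B).val := by
      rw [hQT, Finset.insert_val_of_notMem hynB, Finset.erase_val]
      rw [hF, Multiset.map_cons, hsndE]
    have hbndF : ∀ pq ∈ F, 1 ≤ pq.1 ∧ pq.1 ≤ k ∧ k < pq.2 ∧ pq.2 ≤ n := by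
      intro pq hpq
      rw [hF, Multiset.mem_cons] at hpq
      rcases hpq with h | h
      · subst h; exact ⟨hbp.1, hbp.2.1, hyk', hyn⟩
      · exact hbndM pq (Multiset.mem_of_mem_erase h)
    have hnfF : (Multiset.map Prod.fst F).Nodup := by rw [hfstF]; exact (B \ T).nodup
    have hnsF : (Multiset.map Prod.snd F).Nodup := by rw [hsndF]; exact (T \ B).nodup
    obtain ⟨hle, _⟩ := match_min n k a rect (Multiset.card F) F rfl hbndF hnfF hnsF
    rw [hfstF, hsndF, ← canonPairs_eq] at hle
    have hsumF : (F.map (fun pq => a pq.1 pq.2)).sum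
        = a p y + ((M'.erase (p, x)).map (fun pq => a pq.1 pq.2)).sum := by
      rw [hF]; simp
    have hsumM : (M'.map (fun pq => a pq.1 pq.2)).sum
        = a p x + ((M'.erase (p, x)).map (fun pq => a pq.1 pq.2)).sum := by
      conv_lhs => rw [hMc]
      simp
    have htri := tri p x y (by omega) (by omega) hxy hyn
    constructor
    · rw [hsumF] at hle; linarith
    · intro hsum
      exfalso
      rw [hsumF] at hle; linarith

lemma applySeq_cons {p : ℕ × ℕ} {rest : List (ℕ × ℕ)} {S T : Finset ℕ}
    (h : applySeq (p :: rest) S = some T) :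
    ∃ T', applySeq rest S = some T' ∧ p.1 ∈ T' ∧ p.2 ∉ T'
      ∧ T = insert p.2 (T'.erase p.1) := by
  unfold applySeq at h
  obtain ⟨T', h1, h2⟩ := Option.bind_eq_some_iff.mp h
  split_ifs at h2 with hc
  · exact ⟨T', h1, hc.1, hc.2, (Option.some_inj.mp h2).symm⟩

lemma applySeq_inv (n k : ℕ) (hk : 1 ≤ k) (hkn : k ≤ n) :
    ∀ L : List (ℕ × ℕ), (∀ p ∈ L, 1 ≤ p.1 ∧ p.1 < p.2 ∧ p.2 ≤ n) →
    ∀ T, applySeq L (Finset.Icc 1 k) = some T →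
      T ⊆ Finset.Icc 1 n ∧ T.card = k := by
  intro L
  induction L with
  | nil =>
    intro _ T hT
    have : T = Finset.Icc 1 k := (Option.some_inj.mp hT).symm
    subst this
    refine ⟨Finset.Icc_subset_Icc le_rfl hkn, by simp [Nat.card_Icc]⟩
  | cons p rest ih =>
    intro hv T hT
    obtain ⟨T', h1, hx, hy, hTeq⟩ := applySeq_cons hT
    obtain ⟨hsub, hcard⟩ := ih (fun q hq => hv q (List.mem_cons_of_mem _ hq)) T' h1
    have hp := hv p (List.mem_cons_self)
    subst hTeq
    constructor
    · intro z hz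
      rw [Finset.mem_insert] at hz
      rcases hz with rfl | hz
      · rw [Finset.mem_Icc]; omega
      · exact hsub (Finset.mem_of_mem_erase hz)
    · rw [Finset.card_insert_of_notMem (fun h => hy (Finset.mem_of_mem_erase h)),
        Finset.card_erase_of_mem hx, hcard]
      omega

lemma main_lemma (n k : ℕ) (a : ℕ → ℕ → ℤ)
    (tri : ∀ x y z, 1 ≤ x → x < y → y < z → z ≤ n → a x z < a x y + a y z)
    (rect : ∀ i i' j j', 1 ≤ i → i < i' → i' < j → j < j' → j' ≤ n →
      a i j' + a i' j < a i j + a i' j')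
    (hk : 1 ≤ k) (hkn : k ≤ n) :
    ∀ L : List (ℕ × ℕ), (∀ p ∈ L, 1 ≤ p.1 ∧ p.1 < p.2 ∧ p.2 ≤ n) →
    ∀ T, applySeq L (Finset.Icc 1 k) = some T →
    ((Multiset.map (fun pq : ℕ × ℕ => a pq.1 pq.2)
        (↑(canonPairs k T) : Multiset (ℕ × ℕ))).sum
      ≤ ((↑L : Multiset (ℕ × ℕ)).map (fun pq : ℕ × ℕ => a pq.1 pq.2)).sum)
    ∧ (((↑L : Multiset (ℕ × ℕ)).map (fun pq : ℕ × ℕ => a pq.1 pq.2)).sum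
        = (Multiset.map (fun pq : ℕ × ℕ => a pq.1 pq.2)
            (↑(canonPairs k T) : Multiset (ℕ × ℕ))).sum
      → (↑L : Multiset (ℕ × ℕ)) = ↑(canonPairs k T)) := by
  intro L
  induction L with
  | nil =>
    intro _ T hT
    have : T = Finset.Icc 1 k := (Option.some_inj.mp hT).symm
    subst this
    have hcp : canonPairs k (Finset.Icc 1 k) = [] := by
      unfold canonPairs
      rw [Finset.sdiff_self, Finset.sort_empty]
      rfl
    rw [hcp]
    constructor
    · simp
    · intro _; rfl
  | cons p rest ih =>
    intro hv T hT
    obtain ⟨T', h1, hx, hy, hTeq⟩ := applySeq_cons hT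
    obtain ⟨ihle, iheq⟩ := ih (fun q hq => hv q (List.mem_cons_of_mem _ hq)) T' h1
    obtain ⟨hsub', hcard'⟩ := applySeq_inv n k hk hkn rest
      (fun q hq => hv q (List.mem_cons_of_mem _ hq)) T' h1
    have hp := hv p (List.mem_cons_self)
    obtain ⟨hstep_le, hstep_eq⟩ := step_lemma n k a tri rect T' hsub' hcard'
      p.1 p.2 hp.1 hp.2.1 hp.2.2 hx hy
    subst hTeq
    have hLsum : ((↑(p :: rest) : Multiset (ℕ × ℕ)).map
        (fun pq : ℕ × ℕ => a pq.1 pq.2)).sum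
        = a p.1 p.2 + ((↑rest : Multiset (ℕ × ℕ)).map
            (fun pq : ℕ × ℕ => a pq.1 pq.2)).sum := by
      rw [← Multiset.cons_coe, Multiset.map_cons, Multiset.sum_cons]
    constructor
    · rw [hLsum]; linarith
    · intro hsum
      rw [hLsum] at hsum
      have h1eq : ((↑rest : Multiset (ℕ × ℕ)).map (fun pq : ℕ × ℕ => a pq.1 pq.2)).sum
          = (Multiset.map (fun pq : ℕ × ℕ => a pq.1 pq.2)
              (↑(canonPairs k T') : Multiset (ℕ × ℕ))).sum := by linarith
      have h2eq := hstep_eq (by linarith)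
      rw [← Multiset.cons_coe, iheq h1eq, h2eq]

/-- For a weight system with all inequalities (a), (b) strict, the minimizing
sequence of root vectors is unique up to permutation: it is the antichain matching
`{(p_1,q_1),…,(p_l,q_l)}`. -/
theorem stmt8 (n k : ℕ) (hn : 2 ≤ n) (a : ℕ → ℕ → ℤ)
    (ha : ∀ i, 1 ≤ i → i + 2 ≤ n → a i (i+1) + a (i+1) (i+2) > a i (i+2))
    (hb : ∀ i j, 1 ≤ i → i + 1 < j → j + 1 ≤ n →
      a i j + a (i+1) (j+1) > a i (j+1) + a (i+1) j)
    (hk : 1 ≤ k) (hkn : k ≤ n)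
    (I : Finset ℕ) (hI : I ⊆ Finset.Icc 1 n) (hcard : I.card = k) :
    ∀ L : List (ℕ × ℕ),
      (∀ p ∈ L, 1 ≤ p.1 ∧ p.1 < p.2 ∧ p.2 ≤ n) →
      applySeq L (Finset.Icc 1 k) = some I →
      (L.map fun p => a p.1 p.2).sum
        = ((canonPairs k I).map fun pq => a pq.1 pq.2).sum →
      (L : Multiset (ℕ × ℕ)) = (canonPairs k I : Multiset (ℕ × ℕ)) := by
  intro L hL happ hsum
  obtain ⟨hle, heq⟩ := main_lemma n k a (tri ha hb) (rect hb) hk hkn L hL I happ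
  apply heq
  simpa only [Multiset.map_coe, Multiset.sum_coe] using hsum
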